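/- Let φ̂_k(x) = T_k(x) − T_{k+2}(x) and φ̃_k(x) = T_k(x) − (2(k+2)/(k+3)) T_{k+2}(x) + ((k+1)/(k+3)) T_{k+4}(x). For all j, k ∈ ℕ the first-derivative matrix entries Ĉ_{kj} = ⟨φ̃_j', φ̂_k⟩_σ satisfy: Ĉ_{kj} = π(k−2)(k+1)/k if j = k−3 (so k ≥ 3); Ĉ_{kj} = −2π(k+1)²/(k+2) if j = k−1; Ĉ_{k,k+1} = π(k+1); and Ĉ_{kj} = 0 otherwise. -/

import Mathlib

open Real Polynomial
open MeasureTheory Set intervalIntegral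

lemma invsqrt_integrableOn :
    IntegrableOn (fun x : ℝ => 1 / Real.sqrt (1 - x ^ 2)) (Icc (-1) 1) := by
  rw [integrableOn_Icc_iff_integrableOn_Ioc]
  exact integrableOn_deriv_of_nonneg Real.continuous_arcsin.continuousOn
    (fun x hx => Real.hasDerivAt_arcsin (ne_of_gt hx.1) (ne_of_lt hx.2))
    (fun x hx => by positivity)

lemma polyw_integrableOn (P : Polynomial ℝ) :
    IntegrableOn (fun x : ℝ => P.eval x / Real.sqrt (1 - x ^ 2)) (Icc (-1) 1) := by
  obtain ⟨C, hC⟩ := (isCompact_Icc : IsCompact (Icc (-1:ℝ) 1)).exists_bound_of_continuousOn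
    P.continuous.continuousOn
  refine Integrable.mono' ((invsqrt_integrableOn.const_mul |C|) : Integrable _ _) ?_ ?_
  · exact (P.continuous.measurable.div
      ((continuous_const.sub (continuous_pow 2)).sqrt.measurable)).aestronglyMeasurable
  · filter_upwards [ae_restrict_mem measurableSet_Icc] with x hx
    rw [Real.norm_eq_abs, abs_div, abs_of_nonneg (Real.sqrt_nonneg _), div_eq_mul_one_div]
    exact mul_le_mul_of_nonneg_right ((hC x hx).trans (le_abs_self C)) (by positivity)

lemma ae_sin_ne : ∀ᵐ θ : ℝ, Real.sin θ ≠ 0 := by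
  have hsub : {θ : ℝ | Real.sin θ = 0} ⊆ Set.range (fun n : ℤ => (n : ℝ) * π) := by
    intro θ h
    rcases Real.sin_eq_zero_iff.mp h with ⟨n, hn⟩
    exact ⟨n, hn⟩
  have : volume {θ : ℝ | Real.sin θ = 0} = 0 :=
    measure_mono_null hsub ((Set.countable_range _).measure_zero _)
  simpa [ae_iff] using this

lemma poly_weight_integral (P : Polynomial ℝ) :
    ∫ x in (-1:ℝ)..1, P.eval x / Real.sqrt (1 - x ^ 2)
      = ∫ θ in (0:ℝ)..π, P.eval (Real.cos θ) := by
  set g : ℝ → ℝ := fun x => P.eval x / Real.sqrt (1 - x ^ 2) with hg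
  have himg : ∀ θ ∈ Ioo (0:ℝ) π, Real.cos θ ∈ Ioo (-1:ℝ) 1 := by
    intro θ hθ
    constructor
    · have := Real.strictAntiOn_cos ⟨hθ.1.le, hθ.2.le⟩ (right_mem_Icc.mpr Real.pi_pos.le) hθ.2
      simpa [Real.cos_pi] using this
    · have := Real.strictAntiOn_cos (left_mem_Icc.mpr Real.pi_pos.le) ⟨hθ.1.le, hθ.2.le⟩ hθ.1
      simpa [Real.cos_zero] using this
  have key := intervalIntegral.integral_comp_smul_deriv''' (a := (0:ℝ)) (b := π)
    (f := Real.cos) (f' := fun θ => -Real.sin θ) (g := g)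
    Real.continuous_cos.continuousOn
    (fun θ _ => (Real.hasDerivAt_cos θ).hasDerivWithinAt)
    ?hgc ?hg1 ?hg2
  case hgc =>
    refine ContinuousOn.mono (s := Ioo (-1:ℝ) 1) ?_ ?_
    · exact ContinuousOn.div P.continuous.continuousOn
        ((continuous_const.sub (continuous_pow 2)).sqrt.continuousOn)
        (fun x hx => by
          have h1 : (0:ℝ) < 1 - x ^ 2 := by nlinarith [hx.1, hx.2, mem_Ioo.mp hx]
          positivity)
    · intro x hx
      rcases hx with ⟨θ, hθ, rfl⟩
      rw [min_eq_left Real.pi_pos.le, max_eq_right Real.pi_pos.le] at hθ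
      exact himg θ hθ
  case hg1 =>
    refine (polyw_integrableOn P).mono_set ?_
    intro x hx
    rcases hx with ⟨θ, _, rfl⟩
    exact ⟨Real.neg_one_le_cos θ, Real.cos_le_one θ⟩
  case hg2 =>
    have hcont : Continuous (fun θ : ℝ => -(P.eval (Real.cos θ))) :=
      (P.continuous.comp Real.continuous_cos).neg
    refine (hcont.integrableOn_uIcc (a := 0) (b := π)).congr ?_
    filter_upwards [ae_restrict_of_ae ae_sin_ne, ae_restrict_mem measurableSet_uIcc]
      with θ hs hmem
    have hmem' : θ ∈ Icc (0:ℝ) π := by rwa [uIcc_of_le Real.pi_pos.le] at hmem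
    have hsp : Real.sqrt (1 - Real.cos θ ^ 2) = Real.sin θ := by
      rw [show (1:ℝ) - Real.cos θ ^ 2 = Real.sin θ ^ 2 by
        have := Real.sin_sq_add_cos_sq θ; linarith]
      exact Real.sqrt_sq_eq_abs _ |>.trans
        (abs_of_nonneg (Real.sin_nonneg_of_nonneg_of_le_pi hmem'.1 hmem'.2))
    show -(P.eval (Real.cos θ)) = -Real.sin θ • g (Real.cos θ)
    rw [hg]
    simp only [smul_eq_mul]
    rw [hsp]
    field_simp
  rw [Real.cos_zero, Real.cos_pi] at key
  rw [intervalIntegral.integral_symm (-1:ℝ) 1] at key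
  have lhs_eq : (∫ θ in (0:ℝ)..π, (fun t => -Real.sin t) θ • (g ∘ Real.cos) θ)
      = ∫ θ in (0:ℝ)..π, -(P.eval (Real.cos θ)) := by
    refine intervalIntegral.integral_congr_ae ?_
    filter_upwards [ae_sin_ne] with θ hs hmem
    rw [uIoc_of_le Real.pi_pos.le] at hmem
    have hsp : Real.sqrt (1 - Real.cos θ ^ 2) = Real.sin θ := by
      rw [show (1:ℝ) - Real.cos θ ^ 2 = Real.sin θ ^ 2 by
        have := Real.sin_sq_add_cos_sq θ; linarith]
      exact Real.sqrt_sq_eq_abs _ |>.trans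
        (abs_of_nonneg (Real.sin_nonneg_of_nonneg_of_le_pi hmem.1.le hmem.2))
    rw [hg]
    simp only [smul_eq_mul]
    simp only [Function.comp]
    rw [hsp]
    field_simp
  rw [lhs_eq, intervalIntegral.integral_neg] at key
  linarith [key]

open Polynomial.Chebyshev in
noncomputable def Aint (k : ℤ) : ℝ := ∫ θ in (0:ℝ)..π, (U ℝ k).eval (Real.cos θ)

lemma integral_cos_int (k : ℤ) (hk : k ≠ 0) :
    ∫ θ in (0:ℝ)..π, Real.cos ((k:ℝ) * θ) = 0 := by
  have hc : (k:ℝ) ≠ 0 := Int.cast_ne_zero.mpr hk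
  rw [intervalIntegral.integral_comp_mul_left (fun x => Real.cos x) hc, _root_.integral_cos]
  simp [Real.sin_int_mul_pi]

open Polynomial.Chebyshev in
lemma U_add_two_eq (n : ℤ) : U ℝ (n + 2) = U ℝ n + 2 * T ℝ (n + 2) := by
  have h1 := U_add_two ℝ n
  have h2 := T_eq_U_sub_X_mul_U ℝ (n + 2)
  rw [show (n + 2 : ℤ) - 1 = n + 1 by ring] at h2
  linear_combination (-1 : Polynomial ℝ) * h1 - 2 * h2

open Polynomial.Chebyshev in
lemma Aint_step (n : ℤ) (hn : n + 2 ≠ 0) : Aint (n + 2) = Aint n := by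
  unfold Aint
  rw [U_add_two_eq]
  have h1 : Continuous fun θ : ℝ => (U ℝ n).eval (Real.cos θ) :=
    (U ℝ n).continuous.comp Real.continuous_cos
  have h2 : Continuous fun θ : ℝ => 2 * Real.cos (((n + 2 : ℤ) : ℝ) * θ) :=
    (continuous_const.mul (Real.continuous_cos.comp (continuous_const.mul continuous_id)))
  calc ∫ θ in (0:ℝ)..π, (U ℝ n + 2 * T ℝ (n+2)).eval (Real.cos θ)
      = ∫ θ in (0:ℝ)..π, ((U ℝ n).eval (Real.cos θ) + 2 * Real.cos (((n+2:ℤ):ℝ) * θ)) := by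
        apply intervalIntegral.integral_congr
        intro θ _
        simp only [Polynomial.eval_add, Polynomial.eval_mul, Polynomial.eval_ofNat, T_real_cos]
    _ = (∫ θ in (0:ℝ)..π, (U ℝ n).eval (Real.cos θ))
        + ∫ θ in (0:ℝ)..π, 2 * Real.cos (((n+2:ℤ):ℝ) * θ) := by
        exact intervalIntegral.integral_add (h1.intervalIntegrable _ _) (h2.intervalIntegrable _ _)
    _ = ∫ θ in (0:ℝ)..π, (U ℝ n).eval (Real.cos θ) := by
        rw [intervalIntegral.integral_const_mul, integral_cos_int _ hn]
        ring

open Polynomial.Chebyshev in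
lemma Aint_nat (n : ℕ) : Aint n = if n % 2 = 0 then π else 0 := by
  induction n using Nat.strong_induction_on with
  | _ n ih =>
    match n with
    | 0 => simp [Aint, U_zero]
    | 1 =>
      have : Aint 1 = 0 := by
        unfold Aint
        calc ∫ θ in (0:ℝ)..π, (U ℝ 1).eval (Real.cos θ)
            = ∫ θ in (0:ℝ)..π, 2 * Real.cos θ := by
              apply intervalIntegral.integral_congr; intro θ _
              simp [U_one]
          _ = 0 := by
              rw [intervalIntegral.integral_const_mul, _root_.integral_cos]
              simp
      simpa using this
    | (n+2) =>
      have : ((n:ℤ) + 2) ≠ 0 := by omega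
      have hstep := Aint_step n this
      rw [show ((n+2 : ℕ) : ℤ) = (n : ℤ) + 2 by push_cast; ring, hstep, ih n (by omega)]
      have h2 : (n + 2) % 2 = n % 2 := by omega
      rw [h2]

open Polynomial.Chebyshev in
lemma Aint_neg_eq (n : ℤ) : Aint (-n - 2) = -Aint n := by
  unfold Aint
  rw [U_neg_sub_two]
  simp [intervalIntegral.integral_neg]

open Polynomial.Chebyshev in
lemma Aint_val (k : ℤ) : Aint k = if k % 2 = 0 then (if 0 ≤ k then π else -π) else 0 := by
  rcases le_or_gt 0 k with hk | hk
  · obtain ⟨n, rfl⟩ := Int.eq_ofNat_of_zero_le hk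
    rw [Aint_nat]
    by_cases h : n % 2 = 0
    · rw [if_pos h, if_pos (by omega), if_pos hk]
    · rw [if_neg h, if_neg (by omega)]
  · by_cases hk1 : k = -1
    · subst hk1
      have : Aint (-1) = 0 := by simp [Aint, U_neg_one]
      rw [this, if_neg (by decide)]
    · have h2 : (0:ℤ) ≤ -k - 2 := by omega
      obtain ⟨n, hn⟩ := Int.eq_ofNat_of_zero_le h2
      have hk' : k = -(n:ℤ) - 2 := by omega
      subst hk'
      rw [Aint_neg_eq, Aint_nat]
      by_cases h : n % 2 = 0
      · rw [if_pos h, if_pos (by omega), if_neg (by omega)]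
      · rw [if_neg h, if_neg (by omega)]
        ring


/-- The k-th Chebyshev polynomial of the first kind, as a real polynomial. -/
noncomputable def chebT (n : ℕ) : Polynomial ℝ := Polynomial.Chebyshev.T ℝ (n : ℤ)

/-- The Chebyshev-weighted inner product `⟨f,g⟩_σ = ∫_{-1}^{1} f g (1-x²)^{-1/2} dx`. -/
noncomputable def chebInner (f g : Polynomial ℝ) : ℝ :=
  ∫ x in (-1:ℝ)..1, f.eval x * g.eval x / Real.sqrt (1 - x ^ 2)

/-- Shen's Dirichlet basis function `φ̂_k = T_k − T_{k+2}`. -/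
noncomputable def shenD (k : ℕ) : Polynomial ℝ := chebT k - chebT (k + 2)

/-- Shen's biharmonic basis function
`φ̃_k = T_k − (2(k+2)/(k+3)) T_{k+2} + ((k+1)/(k+3)) T_{k+4}`. -/
noncomputable def shenB (k : ℕ) : Polynomial ℝ :=
  chebT k - Polynomial.C ((2 * ((k : ℝ) + 2)) / ((k : ℝ) + 3)) * chebT (k + 2)
    + Polynomial.C (((k : ℝ) + 1) / ((k : ℝ) + 3)) * chebT (k + 4)

noncomputable def Dint (m n : ℕ) : ℝ :=
  ∫ θ in (0:ℝ)..π, (Polynomial.derivative (chebT m)).eval (Real.cos θ)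
    * (chebT n).eval (Real.cos θ)

open Polynomial.Chebyshev in
lemma Dint_eq (m n : ℕ) :
    Dint m n = (m : ℝ) / 2 * (Aint ((m:ℤ) + n - 1) + Aint ((m:ℤ) - n - 1)) := by
  unfold Dint
  have key : ∀ θ : ℝ, Real.sin θ ≠ 0 →
      (Polynomial.derivative (chebT m)).eval (Real.cos θ) * (chebT n).eval (Real.cos θ)
      = (m:ℝ)/2 * ((U ℝ ((m:ℤ)+n-1)).eval (Real.cos θ)
          + (U ℝ ((m:ℤ)-n-1)).eval (Real.cos θ)) := by
    intro θ hs
    have hU : ∀ k : ℤ, (U ℝ k).eval (Real.cos θ)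
        = Real.sin (((k + 1 : ℤ) : ℝ) * θ) / Real.sin θ := by
      intro k
      rw [eq_div_iff hs]
      exact_mod_cast U_real_cos θ k
    unfold chebT
    rw [T_derivative_eq_U, Polynomial.eval_mul, Polynomial.eval_intCast, T_real_cos,
      hU, hU, hU]
    field_simp
    push_cast
    rw [show ((m:ℝ) - 1 + 1) = (m:ℝ) by ring,
      show θ * ((m:ℝ) + (n:ℝ) - 1 + 1) = (m:ℝ) * θ + (n:ℝ) * θ by ring,
      show θ * ((m:ℝ) - (n:ℝ) - 1 + 1) = (m:ℝ) * θ - (n:ℝ) * θ by ring,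
      show θ * (n:ℝ) = (n:ℝ) * θ by ring,
      Real.sin_add, Real.sin_sub]
    ring
  have congr1 : (∫ θ in (0:ℝ)..π,
        (Polynomial.derivative (chebT m)).eval (Real.cos θ) * (chebT n).eval (Real.cos θ))
      = ∫ θ in (0:ℝ)..π, (m:ℝ)/2 * ((U ℝ ((m:ℤ)+n-1)).eval (Real.cos θ)
          + (U ℝ ((m:ℤ)-n-1)).eval (Real.cos θ)) := by
    refine intervalIntegral.integral_congr_ae ?_
    filter_upwards [ae_sin_ne] with θ hs _
    exact key θ hs
  rw [congr1]
  have h1 : Continuous fun θ : ℝ => (U ℝ ((m:ℤ)+n-1)).eval (Real.cos θ) :=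
    (U ℝ _).continuous.comp Real.continuous_cos
  have h2 : Continuous fun θ : ℝ => (U ℝ ((m:ℤ)-n-1)).eval (Real.cos θ) :=
    (U ℝ _).continuous.comp Real.continuous_cos
  rw [intervalIntegral.integral_const_mul,
    intervalIntegral.integral_add (h1.intervalIntegrable _ _) (h2.intervalIntegrable _ _)]
  rfl

lemma Dint_val (m n : ℕ) :
    Dint m n = if (m + n) % 2 = 1 ∧ n < m then (m : ℝ) * π else 0 := by
  rw [Dint_eq, Aint_val, Aint_val]
  rcases Nat.eq_zero_or_pos m with rfl | hm
  · rw [if_neg (show ¬((0 + n) % 2 = 1 ∧ n < 0) by omega)]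
    norm_num
  · by_cases hp : (m + n) % 2 = 1
    · by_cases hlt : n < m
      · rw [if_pos (show ((m:ℤ)+n-1) % 2 = 0 by omega), if_pos (by omega),
          if_pos (show ((m:ℤ)-n-1) % 2 = 0 by omega), if_pos (by omega),
          if_pos ⟨hp, hlt⟩]
        ring
      · rw [if_pos (show ((m:ℤ)+n-1) % 2 = 0 by omega), if_pos (by omega),
          if_pos (show ((m:ℤ)-n-1) % 2 = 0 by omega), if_neg (show ¬(0:ℤ) ≤ (m:ℤ)-n-1 by omega),
          if_neg (by omega)]
        ring
    · rw [if_neg (show ¬((m:ℤ)+n-1) % 2 = 0 by omega),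
        if_neg (show ¬((m:ℤ)-n-1) % 2 = 0 by omega), if_neg (by omega)]
      ring

lemma chebInner_eq (f g : Polynomial ℝ) :
    chebInner f g = ∫ θ in (0:ℝ)..π, f.eval (Real.cos θ) * g.eval (Real.cos θ) := by
  unfold chebInner
  have := poly_weight_integral (f * g)
  simpa [Polynomial.eval_mul] using this

lemma DintV0 (m n : ℕ) (h : ¬((m + n) % 2 = 1 ∧ n < m)) : Dint m n = 0 := by
  rw [Dint_val, if_neg h]

lemma DintV1 (m n : ℕ) (h : (m + n) % 2 = 1 ∧ n < m) : Dint m n = (m : ℝ) * π := by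
  rw [Dint_val, if_pos h]

lemma shen_expand (j k : ℕ) :
    chebInner (Polynomial.derivative (shenB j)) (shenD k)
      = (Dint j k - Dint j (k + 2))
        - 2 * ((j:ℝ) + 2) / ((j:ℝ) + 3) * (Dint (j+2) k - Dint (j+2) (k+2))
        + ((j:ℝ) + 1) / ((j:ℝ) + 3) * (Dint (j+4) k - Dint (j+4) (k+2)) := by
  have hc : ∀ p : Polynomial ℝ, Continuous fun θ : ℝ => p.eval (Real.cos θ) :=
    fun p => p.continuous.comp Real.continuous_cos
  have i1 : ∀ p q : ℕ, IntervalIntegrable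
      (fun θ : ℝ => (Polynomial.derivative (chebT p)).eval (Real.cos θ)
        * (chebT q).eval (Real.cos θ)) volume 0 π :=
    fun p q => ((hc _).mul (hc _)).intervalIntegrable _ _
  set a : ℝ := 2 * ((j:ℝ) + 2) / ((j:ℝ) + 3) with ha
  set b : ℝ := ((j:ℝ) + 1) / ((j:ℝ) + 3) with hb
  rw [chebInner_eq]
  have hpt : ∀ θ ∈ Set.uIcc (0:ℝ) π,
      (Polynomial.derivative (shenB j)).eval (Real.cos θ) * (shenD k).eval (Real.cos θ)
      = ((Polynomial.derivative (chebT j)).eval (Real.cos θ) * (chebT k).eval (Real.cos θ)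
          - (Polynomial.derivative (chebT j)).eval (Real.cos θ) * (chebT (k+2)).eval (Real.cos θ))
        - a * ((Polynomial.derivative (chebT (j+2))).eval (Real.cos θ) * (chebT k).eval (Real.cos θ)
          - (Polynomial.derivative (chebT (j+2))).eval (Real.cos θ) * (chebT (k+2)).eval (Real.cos θ))
        + b * ((Polynomial.derivative (chebT (j+4))).eval (Real.cos θ) * (chebT k).eval (Real.cos θ)
          - (Polynomial.derivative (chebT (j+4))).eval (Real.cos θ) * (chebT (k+2)).eval (Real.cos θ)) := by
    intro θ _
    simp only [shenB, shenD, Polynomial.derivative_add, Polynomial.derivative_sub,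
      Polynomial.derivative_C_mul, Polynomial.eval_add, Polynomial.eval_sub, Polynomial.eval_mul,
      Polynomial.eval_C]
    ring
  rw [intervalIntegral.integral_congr hpt]
  rw [intervalIntegral.integral_add (((i1 j k).sub (i1 j (k+2))).sub
      (((i1 (j+2) k).sub (i1 (j+2) (k+2))).const_mul a))
      (((i1 (j+4) k).sub (i1 (j+4) (k+2))).const_mul b),
    intervalIntegral.integral_sub ((i1 j k).sub (i1 j (k+2)))
      (((i1 (j+2) k).sub (i1 (j+2) (k+2))).const_mul a),
    intervalIntegral.integral_const_mul, intervalIntegral.integral_const_mul,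
    intervalIntegral.integral_sub (i1 j k) (i1 j (k+2)),
    intervalIntegral.integral_sub (i1 (j+2) k) (i1 (j+2) (k+2)),
    intervalIntegral.integral_sub (i1 (j+4) k) (i1 (j+4) (k+2))]
  rfl

/-- The first-derivative matrix `Ĉ_{kj} = ⟨φ̃_j', φ̂_k⟩_σ`: it is zero except on
the diagonals `j = k−3, k−1, k+1` where `Ĉ_{k,k−3} = π(k−2)(k+1)/k` (for `k ≥ 3`),
`Ĉ_{k,k−1} = −2π(k+1)²/(k+2)` and `Ĉ_{k,k+1} = π(k+1)`. -/
theorem shen_first_derivative_matrix_BD :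
    -- j = k − 3 (stated with row index k+3): Ĉ_{k+3,k} = π(k+1)(k+4)/(k+3)
    (∀ k : ℕ, chebInner (Polynomial.derivative (shenB k)) (shenD (k + 3)) =
      Real.pi * (((k : ℝ) + 3) - 2) * (((k : ℝ) + 3) + 1) / ((k : ℝ) + 3)) ∧
    -- j = k − 1 (stated with row index k+1): Ĉ_{k+1,k} = −2π((k+1)+1)²/((k+1)+2)
    (∀ k : ℕ, chebInner (Polynomial.derivative (shenB k)) (shenD (k + 1)) =
      -2 * Real.pi * (((k : ℝ) + 1) + 1) ^ 2 / (((k : ℝ) + 1) + 2)) ∧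
    -- j = k + 1: Ĉ_{k,k+1} = π(k+1)
    (∀ k : ℕ, chebInner (Polynomial.derivative (shenB (k + 1))) (shenD k) =
      Real.pi * ((k : ℝ) + 1)) ∧
    -- otherwise zero
    (∀ j k : ℕ, k ≠ j + 3 → k ≠ j + 1 → j ≠ k + 1 →
      chebInner (Polynomial.derivative (shenB j)) (shenD k) = 0) := by
  have hne : ∀ k : ℕ, ((k : ℝ) + 3) ≠ 0 := fun k => by positivity
  refine ⟨fun k => ?_, fun k => ?_, fun k => ?_, fun j k h1 h2 h3 => ?_⟩
  · rw [shen_expand, DintV0 k (k+3) (by omega), DintV0 k (k+3+2) (by omega),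
      DintV0 (k+2) (k+3) (by omega), DintV0 (k+2) (k+3+2) (by omega),
      DintV1 (k+4) (k+3) (by omega), DintV0 (k+4) (k+3+2) (by omega)]
    field_simp
    push_cast
    ring
  · rw [shen_expand, DintV0 k (k+1) (by omega), DintV0 k (k+1+2) (by omega),
      DintV1 (k+2) (k+1) (by omega), DintV0 (k+2) (k+1+2) (by omega),
      DintV1 (k+4) (k+1) (by omega), DintV1 (k+4) (k+1+2) (by omega)]
    field_simp
    push_cast
    ring
  · rw [shen_expand, DintV1 (k+1) k (by omega), DintV0 (k+1) (k+2) (by omega),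
      DintV1 (k+1+2) k (by omega), DintV1 (k+1+2) (k+2) (by omega),
      DintV1 (k+1+4) k (by omega), DintV1 (k+1+4) (k+2) (by omega)]
    push_cast
    ring
  · rw [shen_expand]
    have hcase : (j + k) % 2 = 0 ∨ j + 5 ≤ k ∨ k + 3 ≤ j := by omega
    rcases hcase with h | h | h
    · rw [DintV0 j k (by omega), DintV0 j (k+2) (by omega),
        DintV0 (j+2) k (by omega), DintV0 (j+2) (k+2) (by omega),
        DintV0 (j+4) k (by omega), DintV0 (j+4) (k+2) (by omega)]
      ring
    · rw [DintV0 j k (by omega), DintV0 j (k+2) (by omega),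
        DintV0 (j+2) k (by omega), DintV0 (j+2) (k+2) (by omega),
        DintV0 (j+4) k (by omega), DintV0 (j+4) (k+2) (by omega)]
      ring
    · by_cases hp : (j + k) % 2 = 1
      · rw [DintV1 j k (by omega), DintV1 j (k+2) (by omega),
          DintV1 (j+2) k (by omega), DintV1 (j+2) (k+2) (by omega),
          DintV1 (j+4) k (by omega), DintV1 (j+4) (k+2) (by omega)]
        ring
      · rw [DintV0 j k (by omega), DintV0 j (k+2) (by omega),
          DintV0 (j+2) k (by omega), DintV0 (j+2) (k+2) (by omega),
          DintV0 (j+4) k (by omega), DintV0 (j+4) (k+2) (by omega)]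
        ring
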